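/- arXiv:0906.3724 — 2 statements merged into one kernel-verified Lean document; each statement's English description precedes it below -/
import Mathlib

section
/- Let G be a simple graph on n ≥ 1 vertices each of whose connected components is a clique (i.e. the adjacency relation is transitive: any two distinct vertices in the same connected component are adjacent). Then the number of connected components of G is at least n²/(n + 2e(G)), where e(G) is the number of edges of G, as an inequality of real numbers. -/
namespace OrderedGraphs

/-- The order-preserving map `Fin (n-1) → Fin n` that skips the vertex `v`. -/
def delMap {n : ℕ} (v : Fin n) (i : Fin (n - 1)) : Fin n :=
  if h : (i : ℕ) < (v : ℕ) then ⟨i, lt_trans h v.isLt⟩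
  else ⟨(i : ℕ) + 1, by have h1 := i.isLt; have h2 := v.isLt; omega⟩

/-- `erase G v` is the ordered graph `G − v` on `[n-1]`, obtained by deleting `v` and
relabelling the remaining vertices order-preservingly. -/
def erase {n : ℕ} (G : SimpleGraph (Fin n)) (v : Fin n) : SimpleGraph (Fin (n - 1)) where
  Adj i j := G.Adj (delMap v i) (delMap v j)
  symm := ⟨fun i j h => G.adj_symm h⟩
  loopless := ⟨fun i h => G.irrefl h⟩

/-- The shadow `∂G` of a single ordered graph. -/
def shadow {n : ℕ} (G : SimpleGraph (Fin n)) : Set (SimpleGraph (Fin (n - 1))) :=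
  {H | ∃ v : Fin n, H = erase G v}

/-- The shadow `∂𝒢` of a collection of ordered graphs. -/
def shadowCol {n : ℕ} (𝒢 : Set (SimpleGraph (Fin n))) : Set (SimpleGraph (Fin (n - 1))) :=
  ⋃ G ∈ 𝒢, shadow G

/-- `x ∼ y` : the relation `Γ(x) \ {y} = Γ(y) \ {x}`. -/
def simRel {n : ℕ} (G : SimpleGraph (Fin n)) (x y : Fin n) : Prop :=
  G.neighborSet x \ {y} = G.neighborSet y \ {x}

/-- A set of consecutive vertices whose elements are pairwise `∼`-equivalent. -/
def IsHomInterval {n : ℕ} (G : SimpleGraph (Fin n)) (B : Set (Fin n)) : Prop :=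
  B.OrdConnected ∧ ∀ x ∈ B, ∀ y ∈ B, simRel G x y

/-- A homogeneous block: a maximal nonempty set of consecutive vertices whose elements are
pairwise `∼`-equivalent. -/
def IsHomBlock {n : ℕ} (G : SimpleGraph (Fin n)) (B : Set (Fin n)) : Prop :=
  B.Nonempty ∧ IsHomInterval G B ∧ ∀ C, IsHomInterval G C → B ⊆ C → B = C

open Classical in
/-- The excess `m(G) = Σ_{B : |B| ≥ 3} (|B| − 2)`, the sum over homogeneous blocks;
(truncated ℕ-subtraction makes blocks with `|B| ≤ 2` contribute `0`). -/
noncomputable def excess {n : ℕ} (G : SimpleGraph (Fin n)) : ℕ :=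
  ∑ B ∈ Finset.univ.filter (fun B : Finset (Fin n) => IsHomBlock G ↑B), (B.card - 2)

/-- Two ordered graphs have the same type. -/
def SameType {n n' : ℕ} (G : SimpleGraph (Fin n)) (G' : SimpleGraph (Fin n')) : Prop :=
  ∃ (k : ℕ) (B : Fin k → Set (Fin n)) (B' : Fin k → Set (Fin n')),
    (∀ i, IsHomBlock G (B i)) ∧ (∀ C, IsHomBlock G C → ∃ i, C = B i) ∧
    (∀ i j : Fin k, i < j → ∀ x ∈ B i, ∀ y ∈ B j, x < y) ∧
    (∀ i, IsHomBlock G' (B' i)) ∧ (∀ C, IsHomBlock G' C → ∃ i, C = B' i) ∧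
    (∀ i j : Fin k, i < j → ∀ x ∈ B' i, ∀ y ∈ B' j, x < y) ∧
    (∀ i j : Fin k, (∀ u ∈ B i, ∀ v ∈ B j, u ≠ v → G.Adj u v) ↔
            (∀ u ∈ B' i, ∀ v ∈ B' j, u ≠ v → G'.Adj u v)) ∧
    (∀ i, (B i).ncard = 1 ↔ (B' i).ncard = 1)

/-- The shadow within types `∂_τ G`. -/
def typeShadow {n : ℕ} (G : SimpleGraph (Fin n)) : Set (SimpleGraph (Fin (n - 1))) :=
  {H ∈ shadow G | SameType H G}

/-- The shadow within types `∂_τ 𝒢` of a collection. -/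
def typeShadowCol {n : ℕ} (𝒢 : Set (SimpleGraph (Fin n))) : Set (SimpleGraph (Fin (n - 1))) :=
  ⋃ G ∈ 𝒢, typeShadow G

/-- `Z^d(n) = {x ∈ ℤ^d : x_i ≥ 0, Σ_i x_i = n}`. -/
def Zdn (d n : ℕ) : Set (Fin d → ℤ) := {x | (∀ i, 0 ≤ x i) ∧ ∑ i, x i = (n : ℤ)}

/-- A line in `Z^d(n)`, determined by two coordinates `j, k`. -/
def ZLine (d n : ℕ) (j k : Fin d) : Set (Fin d → ℤ) :=
  {x ∈ Zdn d n | ∀ i, i ≠ j → i ≠ k → x i = 0}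

/-- The shadow of a subset `A ⊆ Z^d(n)`. -/
def Zshadow (d n : ℕ) (A : Set (Fin d → ℤ)) : Set (Fin d → ℤ) :=
  {x ∈ Zdn d (n - 1) | ∃ y ∈ A, ∀ i, x i ≤ y i}

/-- `phiAt G d x` : `x ∈ ℤ^d` is the image `φ(G)` of `G`, i.e. the homogeneous blocks of `G`
of size at least `2`, in increasing order, are `B_1 < ⋯ < B_d` and `x i = |B_i| − 2`. -/
def phiAt {n : ℕ} (G : SimpleGraph (Fin n)) (d : ℕ) (x : Fin d → ℤ) : Prop :=
  ∃ B : Fin d → Set (Fin n),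
    (∀ i, IsHomBlock G (B i) ∧ 2 ≤ (B i).ncard) ∧
    (∀ C, IsHomBlock G C → 2 ≤ C.ncard → ∃ i, C = B i) ∧
    (∀ i j : Fin d, i < j → ∀ u ∈ B i, ∀ v ∈ B j, u < v) ∧
    (∀ i, x i = ((B i).ncard : ℤ) - 2)

/-- `𝒢₀` (a set of ordered graphs of a common type, of common excess `m`) contains a line:
some subset `S ⊆ 𝒢₀` has `φ(S)` equal to a line in `Z^d(m)`. -/
def ContainsLine {n : ℕ} (𝒢₀ : Set (SimpleGraph (Fin n))) (m : ℕ) : Prop :=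
  ∃ S ⊆ 𝒢₀, ∃ (d : ℕ) (j k : Fin d),
    {x : Fin d → ℤ | ∃ G ∈ S, phiAt G d x} = ZLine d m j k

/-- `eraseSet G X` is `G − X`: delete all vertices of `X` and relabel order-preservingly. -/
noncomputable def eraseSet {n : ℕ} (G : SimpleGraph (Fin n)) (X : Finset (Fin n)) :
    SimpleGraph (Fin (n - X.card)) where
  Adj i j := G.Adj ((Xᶜ.orderIsoOfFin (by rw [Finset.card_compl, Fintype.card_fin]) i) : Fin n)
                   ((Xᶜ.orderIsoOfFin (by rw [Finset.card_compl, Fintype.card_fin]) j) : Fin n)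
  symm := ⟨fun i j h => G.adj_symm h⟩
  loopless := ⟨fun i h => G.irrefl h⟩

/-- A semi-homogeneous block: a set `B` of consecutive vertices such that all vertices of `B`
have the same neighbourhood outside `B`, and, for some `L ⊆ ℕ`, two vertices `x, y ∈ B` are
adjacent iff `|x − y| ∈ L`. -/
def IsSemiHomBlock {n : ℕ} (G : SimpleGraph (Fin n)) (B : Set (Fin n)) : Prop :=
  B.OrdConnected ∧
  (∀ x ∈ B, ∀ y ∈ B, G.neighborSet x \ B = G.neighborSet y \ B) ∧
  ∃ L : Set ℕ, ∀ x ∈ B, ∀ y ∈ B, (G.Adj x y ↔ ((x : ℤ) - (y : ℤ)).natAbs ∈ L)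


/-- **Lemma (unions of cliques).** If every connected component of `G` is a clique
(the adjacency relation is transitive on components), then `G` has at least
`n² / (n + 2e(G))` components. -/
theorem cliques_components {V : Type*} [Fintype V] (G : SimpleGraph V)
    (hn : 1 ≤ Fintype.card V)
    (hclique : ∀ u v : V, u ≠ v → G.Reachable u v → G.Adj u v) :
    ((Fintype.card V : ℝ)) ^ 2 / ((Fintype.card V : ℝ) + 2 * (G.edgeSet.ncard : ℝ)) ≤
      (Nat.card G.ConnectedComponent : ℝ) := by
  classical
  -- characterize adjacency
  have hadj : ∀ u v : V, G.Adj u v ↔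
      u ≠ v ∧ G.connectedComponentMk u = G.connectedComponentMk v := by
    intro u v
    constructor
    · intro h
      exact ⟨h.ne, SimpleGraph.ConnectedComponent.sound h.reachable⟩
    · rintro ⟨hne, hc⟩
      exact hclique u v hne (SimpleGraph.ConnectedComponent.exact hc)
  set f : G.ConnectedComponent → ℕ :=
    fun c => (Finset.univ.filter (fun v => G.connectedComponentMk v = c)).card with hf
  have h1 : ∑ c, f c = Fintype.card V := by
    rw [← Finset.card_univ]
    exact (Finset.card_eq_sum_card_fiberwise (fun v _ => Finset.mem_univ _)).symm
  have hdeg : ∀ v : V, G.degree v + 1 = f (G.connectedComponentMk v) := by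
    intro v
    have hnb : G.neighborFinset v =
        (Finset.univ.filter
          (fun u => G.connectedComponentMk u = G.connectedComponentMk v)).erase v := by
      ext u
      simp only [SimpleGraph.mem_neighborFinset, Finset.mem_erase, Finset.mem_filter,
        Finset.mem_univ, true_and]
      rw [hadj]
      exact ⟨fun ⟨a, b⟩ => ⟨a.symm, b.symm⟩, fun ⟨a, b⟩ => ⟨a.symm, b.symm⟩⟩
    have hvmem : v ∈ Finset.univ.filter
        (fun u => G.connectedComponentMk u = G.connectedComponentMk v) :=
      Finset.mem_filter.2 ⟨Finset.mem_univ v, rfl⟩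
    rw [SimpleGraph.degree, hnb, Finset.card_erase_of_mem hvmem]
    have hb : f (G.connectedComponentMk v) = (Finset.univ.filter
        (fun u => G.connectedComponentMk u = G.connectedComponentMk v)).card := rfl
    have := Finset.card_pos.2 ⟨v, hvmem⟩
    omega
  have h2 : Fintype.card V + 2 * G.edgeFinset.card = ∑ c, f c ^ 2 := by
    rw [← SimpleGraph.sum_degrees_eq_twice_card_edges, ← Finset.card_univ,
      Finset.card_eq_sum_ones]
    rw [← Finset.sum_add_distrib]
    calc ∑ v : V, (1 + G.degree v) = ∑ v : V, f (G.connectedComponentMk v) := by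
          apply Finset.sum_congr rfl
          intro v _
          rw [← hdeg v]; ring
      _ = ∑ c, ∑ v ∈ Finset.univ.filter (fun v => G.connectedComponentMk v = c),
            f (G.connectedComponentMk v) :=
          (Finset.sum_fiberwise_of_maps_to (fun v _ => Finset.mem_univ _) _).symm
      _ = ∑ c, f c ^ 2 := by
          apply Finset.sum_congr rfl
          intro c _
          rw [Finset.sum_congr rfl (fun v hv => by
            rw [(Finset.mem_filter.1 hv).2]),
            Finset.sum_const, smul_eq_mul]
          have hfc : (Finset.univ.filter (fun v => G.connectedComponentMk v = c)).card = f c :=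
            rfl
          rw [hfc, sq]
  have hE : G.edgeSet.ncard = G.edgeFinset.card := by
    have := Set.ncard_coe_finset G.edgeFinset
    rwa [SimpleGraph.coe_edgeFinset] at this
  have hpos : (0 : ℝ) < (Fintype.card V : ℝ) + 2 * (G.edgeSet.ncard : ℝ) := by
    have : (1 : ℝ) ≤ (Fintype.card V : ℝ) := by exact_mod_cast hn
    positivity
  rw [div_le_iff₀ hpos, Nat.card_eq_fintype_card]
  have hCS : ((∑ c, f c : ℕ) : ℝ) ^ 2 ≤
      (Fintype.card G.ConnectedComponent : ℝ) * ∑ c, ((f c : ℝ)) ^ 2 := by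
    have := sq_sum_le_card_mul_sum_sq (s := (Finset.univ : Finset G.ConnectedComponent))
      (f := fun c => (f c : ℝ))
    push_cast
    simpa using this
  calc ((Fintype.card V : ℝ)) ^ 2 = ((∑ c, f c : ℕ) : ℝ) ^ 2 := by rw [h1]
    _ ≤ (Fintype.card G.ConnectedComponent : ℝ) * ∑ c, ((f c : ℝ)) ^ 2 := hCS
    _ = (Fintype.card G.ConnectedComponent : ℝ) *
          ((Fintype.card V : ℝ) + 2 * (G.edgeSet.ncard : ℝ)) := by
        rw [hE]
        congr 1
        norm_cast
        exact h2.symm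

end OrderedGraphs
end

section
/- Let n ≥ 2 and, for each k ∈ [n], let G_k be the ordered graph on [n] with edge set E(G_k) = {ij : 1 ≤ i < j ≤ k}. Then the collection 𝒢_1 = {G_k : k ∈ [n]} satisfies |𝒢_1| = n and |∂𝒢_1| = n − 1. -/
namespace OrderedGraphs

/-- The ordered graph on `[n]` with edge set `{ij : 1 ≤ i < j ≤ k}` (vertices labelled
`1, …, n`; in `Fin n` the vertex labelled `i` is `i - 1`). -/
def cliqueGraph (n k : ℕ) : SimpleGraph (Fin n) where
  Adj i j := i ≠ j ∧ (i : ℕ) < k ∧ (j : ℕ) < k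
  symm := ⟨fun i j h => ⟨h.1.symm, h.2.2, h.2.1⟩⟩
  loopless := ⟨fun i h => h.1 rfl⟩

lemma clique_adj {m k : ℕ} {i j : Fin m} :
    (cliqueGraph m k).Adj i j ↔ i ≠ j ∧ (i : ℕ) < k ∧ (j : ℕ) < k := Iff.rfl

lemma erase_adj {m : ℕ} (G : SimpleGraph (Fin m)) (v : Fin m) (i j : Fin (m - 1)) :
    (erase G v).Adj i j ↔ G.Adj (delMap v i) (delMap v j) := Iff.rfl

lemma clique_inj {m k k' : ℕ} (hk : 1 ≤ k) (hkm : k ≤ m) (hk' : 1 ≤ k') (hk'm : k' ≤ m)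
    (h : cliqueGraph m k = cliqueGraph m k') : k = k' := by
  by_contra hne
  wlog hlt : k < k' generalizing k k'
  · exact this hk' hk'm hk hkm h.symm (Ne.symm hne) (by omega)
  have hadj : (cliqueGraph m k').Adj ⟨0, by omega⟩ ⟨k' - 1, by omega⟩ := by
    refine ⟨?_, by simpa using (by omega : 0 < k'), by simpa using (by omega : k' - 1 < k')⟩
    simp [Fin.ext_iff]; omega
  rw [← h] at hadj
  have h1 := hadj.2.2
  simp only [clique_adj] at h1
  omega

lemma erase_clique {n k : ℕ} (v : Fin n) :
    erase (cliqueGraph n k) v = cliqueGraph (n - 1) (if (v : ℕ) < k then k - 1 else k) := by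
  ext i j
  have hi := i.isLt
  have hj := j.isLt
  have hv := v.isLt
  rw [erase_adj, clique_adj, clique_adj]
  simp only [delMap, ne_eq, Fin.ext_iff]
  split_ifs <;> simp_all <;> omega

lemma clique_zero_one (m : ℕ) : cliqueGraph m 0 = cliqueGraph m 1 := by
  ext i j
  rw [clique_adj, clique_adj]
  simp only [ne_eq, Fin.ext_iff]
  omega

/-- **Sharpness example.** The collection `𝒢₁ = {G_k : k ∈ [n]}`, where
`E(G_k) = {ij : 1 ≤ i < j ≤ k}`, satisfies `|𝒢₁| = n` and `|∂𝒢₁| = n − 1`. -/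
theorem sharpness_cliques (n : ℕ) (hn : 2 ≤ n) :
    ({G : SimpleGraph (Fin n) | ∃ k, 1 ≤ k ∧ k ≤ n ∧ G = cliqueGraph n k}).ncard = n ∧
    (shadowCol
      {G : SimpleGraph (Fin n) | ∃ k, 1 ≤ k ∧ k ≤ n ∧ G = cliqueGraph n k}).ncard = n - 1 := by

  have hset : {G : SimpleGraph (Fin n) | ∃ k, 1 ≤ k ∧ k ≤ n ∧ G = cliqueGraph n k}
      = cliqueGraph n '' Set.Icc 1 n := by
    ext G
    simp only [Set.mem_setOf_eq, Set.mem_image, Set.mem_Icc]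
    constructor
    · rintro ⟨k, h1, h2, rfl⟩; exact ⟨k, ⟨h1, h2⟩, rfl⟩
    · rintro ⟨k, ⟨h1, h2⟩, rfl⟩; exact ⟨k, h1, h2, rfl⟩
  have hshad : shadowCol {G : SimpleGraph (Fin n) | ∃ k, 1 ≤ k ∧ k ≤ n ∧ G = cliqueGraph n k}
      = cliqueGraph (n - 1) '' Set.Icc 1 (n - 1) := by
    ext H
    simp only [shadowCol, shadow, Set.mem_iUnion, Set.mem_setOf_eq, Set.mem_image, Set.mem_Icc]
    constructor
    · rintro ⟨G, ⟨k, hk1, hkn, rfl⟩, v, rfl⟩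
      rw [erase_clique]
      by_cases hv : (v : ℕ) < k
      · by_cases hk2 : 2 ≤ k
        · exact ⟨k - 1, ⟨by omega, by omega⟩, by rw [if_pos hv]⟩
        · have hk1' : k = 1 := by omega
          subst hk1'
          refine ⟨1, ⟨le_refl 1, by omega⟩, ?_⟩
          rw [if_pos hv]
          exact (clique_zero_one _).symm
      · exact ⟨k, ⟨hk1, by have := v.isLt; omega⟩, by rw [if_neg hv]⟩
    · rintro ⟨j, ⟨hj1, hjn⟩, rfl⟩
      refine ⟨cliqueGraph n j, ⟨j, hj1, by omega, rfl⟩, ⟨n - 1, by omega⟩, ?_⟩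
      rw [erase_clique, if_neg (by simp only []; omega)]
  constructor
  · rw [hset, Set.ncard_image_of_injOn
      (fun k hk k' hk' h => clique_inj hk.1 hk.2 hk'.1 hk'.2 h)]
    rw [← Finset.coe_Icc, Set.ncard_coe_finset, Nat.card_Icc]; omega
  · rw [hshad, Set.ncard_image_of_injOn
      (fun k hk k' hk' h => clique_inj hk.1 hk.2 hk'.1 hk'.2 h)]
    rw [← Finset.coe_Icc, Set.ncard_coe_finset, Nat.card_Icc]; omega


end OrderedGraphs
end
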